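/- For all real numbers a, b with a > 1/γ and b > 1/γ, one has |j(a) − j(b)| ≤ q(1−q)(a + (q−1)/γ)^{q−2} |a − b| + q(1−q)(2−q)(q/γ)^{q−3} (a − b)². -/

import Mathlib

/-- The superposition function `j` from the first-order optimality system, with
`δ_γ = q^q γ^(1-q)`.  Powers are real powers. -/
noncomputable def jfun (q γ t : ℝ) : ℝ :=
  if 1 / γ < |t| then
    (q ^ q * γ ^ (1 - q) - q * (|t| + (q - 1) / γ) ^ (q - 1)) * Real.sign t
  else 0

/-- Second-order Taylor estimate used in the proof of Theorem 4.3: for all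
`a, b > 1/γ`,
`|j(a) − j(b)| ≤ q(1−q)(a + (q−1)/γ)^(q−2) |a − b|
     + q(1−q)(2−q)(q/γ)^(q−3) (a − b)²`. -/
theorem jfun_taylor_estimate (q γ : ℝ) (hq0 : 0 < q) (hq1 : q < 1) (hγ : 0 < γ) :
    ∀ a b : ℝ, 1 / γ < a → 1 / γ < b →
      |jfun q γ a - jfun q γ b| ≤
        q * (1 - q) * (a + (q - 1) / γ) ^ (q - 2) * |a - b| +
          q * (1 - q) * (2 - q) * (q / γ) ^ (q - 3) * (a - b) ^ 2 := by
  intro a b ha hb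
  set c : ℝ := (q - 1) / γ with hc
  have hγ' : 0 < 1 / γ := by positivity
  have hqγ : 0 < q / γ := by positivity
  have key : ∀ t : ℝ, 1 / γ < t → q / γ < t + c := by
    intro t ht
    have h : q / γ = 1 / γ + c := by rw [hc]; ring
    rw [h]; linarith
  have haq : 0 < a + c := lt_trans hqγ (key a ha)
  -- rewrite jfun on the region t > 1/γ
  have hsign : ∀ t : ℝ, 1 / γ < t →
      jfun q γ t = q ^ q * γ ^ (1 - q) - q * (t + c) ^ (q - 1) := by
    intro t ht
    have ht0 : 0 < t := lt_trans hγ' ht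
    rw [jfun, if_pos (by rwa [abs_of_pos ht0]), abs_of_pos ht0, Real.sign_of_pos ht0, mul_one]
  rw [hsign a ha, hsign b hb]
  -- the relevant function and its derivatives
  set g : ℝ → ℝ := fun t => q * (t + c) ^ (q - 1) with hg
  set g' : ℝ → ℝ := fun t => q * (q - 1) * (t + c) ^ (q - 2) with hg'
  set g'' : ℝ → ℝ := fun t => q * (q - 1) * (q - 2) * (t + c) ^ (q - 3) with hg''
  set s : Set ℝ := Set.Icc (min a b) (max a b) with hs
  have hmem : ∀ x ∈ s, 1 / γ < x := fun x hx =>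
    lt_of_lt_of_le (lt_min ha hb) hx.1
  have hxc : ∀ x ∈ s, 0 < x + c := fun x hx => lt_trans hqγ (key x (hmem x hx))
  have has : a ∈ s := ⟨min_le_left _ _, le_max_left _ _⟩
  have hbs : b ∈ s := ⟨min_le_right _ _, le_max_right _ _⟩
  have hconv : Convex ℝ s := convex_Icc _ _
  -- derivative facts
  have hderiv1 : ∀ x : ℝ, 0 < x + c → HasDerivAt g (g' x) x := by
    intro x hx
    have h1 : HasDerivAt (fun y : ℝ => y + c) 1 x := (hasDerivAt_id x).add_const c
    have h2 : HasDerivAt (fun y : ℝ => (y + c) ^ (q - 1))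
        ((q - 1) * (x + c) ^ (q - 1 - 1) * 1) x :=
      by have := (Real.hasDerivAt_rpow_const (x := x + c) (p := q - 1) (Or.inl hx.ne')); exact this.comp x h1
    have h3 := h2.const_mul q
    refine h3.congr_deriv ?_
    rw [hg']; ring_nf
  have hderiv2 : ∀ x : ℝ, 0 < x + c → HasDerivAt g' (g'' x) x := by
    intro x hx
    have h1 : HasDerivAt (fun y : ℝ => y + c) 1 x := (hasDerivAt_id x).add_const c
    have h2 : HasDerivAt (fun y : ℝ => (y + c) ^ (q - 2))
        ((q - 2) * (x + c) ^ (q - 2 - 1) * 1) x :=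
      by have := (Real.hasDerivAt_rpow_const (x := x + c) (p := q - 2) (Or.inl hx.ne')); exact this.comp x h1
    have h3 := h2.const_mul (q * (q - 1))
    refine h3.congr_deriv ?_
    rw [hg'']; ring_nf
  set M : ℝ := q * (1 - q) * (2 - q) * (q / γ) ^ (q - 3) with hM
  have hcoef : 0 ≤ q * (1 - q) * (2 - q) :=
    mul_nonneg (mul_nonneg hq0.le (by linarith)) (by linarith)
  have hMnn : 0 ≤ M := by
    rw [hM]; exact mul_nonneg hcoef (Real.rpow_nonneg hqγ.le _)
  -- bound on g''
  have hbound : ∀ x ∈ s, ‖g'' x‖ ≤ M := by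
    intro x hx
    have h1 : q / γ ≤ x + c := (key x (hmem x hx)).le
    have h2 : (x + c) ^ (q - 3) ≤ (q / γ) ^ (q - 3) :=
      Real.rpow_le_rpow_of_nonpos hqγ h1 (by linarith)
    have h3 : 0 ≤ (x + c) ^ (q - 3) := Real.rpow_nonneg (hxc x hx).le _
    have h4 : ‖g'' x‖ = q * (1 - q) * (2 - q) * (x + c) ^ (q - 3) := by
      rw [hg'', Real.norm_eq_abs, abs_of_nonneg]
      · ring
      · have : q * (q - 1) * (q - 2) = q * (1 - q) * (2 - q) := by ring
        rw [this]
        exact mul_nonneg hcoef h3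
    rw [h4, hM]
    exact mul_le_mul_of_nonneg_left h2 hcoef
  -- g' is M-Lipschitz on s
  have hlip : ∀ x ∈ s, ‖g' x - g' a‖ ≤ M * ‖x - a‖ := by
    intro x hx
    exact hconv.norm_image_sub_le_of_norm_hasDerivWithin_le
      (fun y hy => (hderiv2 y (hxc y hy)).hasDerivWithinAt) hbound has hx
  -- the remainder function F t = g t - g' a * t
  set F : ℝ → ℝ := fun t => g t - g' a * t with hF
  have hFd : ∀ x ∈ s, HasDerivWithinAt F (g' x - g' a) s x := by
    intro x hx
    have h := ((hderiv1 x (hxc x hx)).sub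
      ((hasDerivAt_id x).const_mul (g' a))).hasDerivWithinAt (s := s)
    refine h.congr_deriv ?_
    ring
  have hdiam : ∀ x ∈ s, ‖x - a‖ ≤ |a - b| := by
    intro x hx
    rw [Real.norm_eq_abs, abs_sub_le_iff]
    have h1 := hx.1; have h2 := hx.2
    have h3 := has.1; have h4 := has.2
    have := abs_sub_abs_le_abs_sub a b
    rcases le_total a b with h | h
    · rw [min_eq_left h] at h1 h3; rw [max_eq_right h] at h2 h4
      rw [abs_of_nonpos (by linarith)]
      constructor <;> linarith
    · rw [min_eq_right h] at h1 h3; rw [max_eq_left h] at h2 h4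
      rw [abs_of_nonneg (by linarith)]
      constructor <;> linarith
  have hFbound : ∀ x ∈ s, ‖g' x - g' a‖ ≤ M * |a - b| := by
    intro x hx
    calc ‖g' x - g' a‖ ≤ M * ‖x - a‖ := hlip x hx
      _ ≤ M * |a - b| := by
          exact mul_le_mul_of_nonneg_left (hdiam x hx) hMnn
  have hFineq : ‖F b - F a‖ ≤ M * |a - b| * ‖b - a‖ :=
    hconv.norm_image_sub_le_of_norm_hasDerivWithin_le hFd hFbound has hbs
  -- assemble
  have hid : q ^ q * γ ^ (1 - q) - q * (a + c) ^ (q - 1) -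
      (q ^ q * γ ^ (1 - q) - q * (b + c) ^ (q - 1)) =
      (F b - F a) + g' a * (b - a) := by
    rw [hF, hg]; ring
  rw [hid]
  have h1 : |(F b - F a) + g' a * (b - a)| ≤ |F b - F a| + |g' a| * |b - a| := by
    calc |(F b - F a) + g' a * (b - a)| ≤ |F b - F a| + |g' a * (b - a)| := abs_add_le _ _
      _ = |F b - F a| + |g' a| * |b - a| := by rw [abs_mul]
  have h2 : |g' a| = q * (1 - q) * (a + c) ^ (q - 2) := by
    have hp : 0 ≤ (a + c) ^ (q - 2) := Real.rpow_nonneg haq.le _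
    have hneg : g' a ≤ 0 := by
      show q * (q - 1) * (a + c) ^ (q - 2) ≤ 0
      exact mul_nonpos_of_nonpos_of_nonneg (by nlinarith) hp
    rw [abs_of_nonpos hneg]
    show -(q * (q - 1) * (a + c) ^ (q - 2)) = _
    ring
  have h3 : |F b - F a| ≤ M * (a - b) ^ 2 := by
    calc |F b - F a| ≤ M * |a - b| * ‖b - a‖ := hFineq
      _ = M * (a - b) ^ 2 := by
          rw [Real.norm_eq_abs, abs_sub_comm b a, mul_assoc, ← abs_mul, ← sq,
            abs_of_nonneg (sq_nonneg _)]
  have h4 : |b - a| = |a - b| := abs_sub_comm b a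
  calc |(F b - F a) + g' a * (b - a)| ≤ |F b - F a| + |g' a| * |b - a| := h1
    _ ≤ M * (a - b) ^ 2 + q * (1 - q) * (a + c) ^ (q - 2) * |a - b| := by
        rw [h2, h4]; linarith
    _ = q * (1 - q) * (a + c) ^ (q - 2) * |a - b| + M * (a - b) ^ 2 := by ring
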